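/- For every natural number n: ∑_{k=0}^{n} C(n,k) · C(2n−k,n) · 3^k = ∑_{k=0}^{n} C(n,k)^2 · 4^k. -/

import Mathlib

open Finset

theorem key_lemma (n j : ℕ) (hj : j ≤ n) :
    n.choose j * (2 * n - j).choose n = ∑ k ∈ range (n + 1), (n.choose k) ^ 2 * k.choose j := by
  rw [Finset.range_eq_Ico]
  rw [← Finset.sum_subset (Finset.Ico_subset_Ico (Nat.zero_le j) le_rfl)
    (by
      intro x hx hnx
      have hxj : x < j := by
        simp [Finset.mem_Ico] at hx hnx
        omega
      rw [Nat.choose_eq_zero_of_lt hxj, mul_zero])]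
  rw [Finset.sum_Ico_eq_sum_range]
  have hrange : n + 1 - j = (n - j) + 1 := by omega
  rw [hrange]
  have h2 : 2 * n - j = (n - j) + n := by omega
  have hsym : (2 * n - j).choose n = (2 * n - j).choose (n - j) := by
    rw [← Nat.choose_symm (by omega : n ≤ 2 * n - j)]
    congr 1
    omega
  rw [hsym, h2, Nat.add_choose_eq, Finset.Nat.sum_antidiagonal_eq_sum_range_succ_mk,
    Finset.mul_sum]
  apply Finset.sum_congr rfl
  intro m hm
  simp only [Finset.mem_range] at hm
  have hmn : j + m ≤ n := by omega
  have h3 : n.choose (j + m) * (j + m).choose j = n.choose j * (n - j).choose m := by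
    rw [Nat.choose_mul (Nat.le_add_right j m)]
    simp
  have h4 : n.choose (j + m) = n.choose (n - j - m) := by
    rw [← Nat.choose_symm hmn]
    congr 1
    omega
  calc n.choose j * ((n - j).choose m * n.choose (n - j - m))
      = (n.choose j * (n - j).choose m) * n.choose (n - j - m) := by ring
    _ = (n.choose (j + m) * (j + m).choose j) * n.choose (j + m) := by rw [h3, ← h4]
    _ = n.choose (j + m) ^ 2 * (j + m).choose j := by ring

theorem hanna_sum_three_eq_four (n : ℕ) :
    ∑ k ∈ range (n + 1), n.choose k * (2 * n - k).choose n * 3 ^ k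
      = ∑ k ∈ range (n + 1), (n.choose k) ^ 2 * 4 ^ k := by
  calc ∑ k ∈ range (n + 1), n.choose k * (2 * n - k).choose n * 3 ^ k
      = ∑ j ∈ range (n + 1), (∑ k ∈ range (n + 1), (n.choose k) ^ 2 * k.choose j) * 3 ^ j := by
        apply Finset.sum_congr rfl
        intro j hj
        rw [key_lemma n j (by simp at hj; omega)]
    _ = ∑ k ∈ range (n + 1), (n.choose k) ^ 2 * ∑ j ∈ range (n + 1), k.choose j * 3 ^ j := by
        simp_rw [Finset.sum_mul, Finset.mul_sum]
        rw [Finset.sum_comm]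
        simp [mul_assoc]
    _ = ∑ k ∈ range (n + 1), (n.choose k) ^ 2 * 4 ^ k := by
        apply Finset.sum_congr rfl
        intro k hk
        simp only [Finset.mem_range] at hk
        congr 1
        have : (4 : ℕ) ^ k = (3 + 1) ^ k := by norm_num
        rw [this, add_pow]
        simp only [one_pow, mul_one]
        rw [← Finset.sum_subset (Finset.range_subset_range.mpr (by omega : k + 1 ≤ n + 1))
          (by
            intro x hx hnx
            simp only [Finset.mem_range] at hx hnx
            rw [Nat.choose_eq_zero_of_lt (by omega)]
            ring)]
        apply Finset.sum_congr rfl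
        intro j hj
        push_cast
        ring
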